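/- Let K = ℚ(α) be a complex cubic number field, where α is an algebraic integer, let Δ = disc(1, α, α²), let φ denote the real embedding of K, and let η ∈ O_K^× be a fundamental unit with |φ(η)| > 1. Then for every ξ ∈ K with |N_{K/ℚ}(ξ)| = k > 0 there exists a unit ε ∈ O_K^× such that, writing ξ·ε = a + bα + cα² with a, b, c ∈ ℚ, one has |c| ≤ (k·|φ(η)|/|Δ|)^{1/3} · (2 + 1/|φ(η)|). -/

import Mathlib

open NumberField

set_option maxHeartbeats 1000000 in
lemma key_ineq_stmt15 (u k P0 P1 s q T : ℝ) (hu : 1 < u)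
    (hP0 : 0 < P0) (hP1 : 0 < P1)
    (hT : 0 < T) (hT3 : T ^ 3 = k * u / (P0 * P1 ^ 2))
    (hs1 : P0 * T / u ≤ s) (hs2 : s < P0 * T)
    (hq : 0 ≤ q) (hqs : q ^ 2 * s = k) :
    s / P0 + 2 * q / P1 ≤ T * (2 + 1 / u) := by
  have hu0 : (0:ℝ) < u := lt_trans one_pos hu
  have hs0 : 0 < s := lt_of_lt_of_le (by positivity) hs1
  set v := Real.sqrt (u * s / (P0 * T)) with hv
  have hv2 : v ^ 2 = u * s / (P0 * T) := Real.sq_sqrt (by positivity)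
  have hv0 : 0 < v := Real.sqrt_pos.2 (by positivity)
  have hv1 : 1 ≤ v := by
    have h1 : (1:ℝ) ≤ u * s / (P0 * T) := by
      rw [le_div_iff₀ (by positivity)]
      have := (div_le_iff₀ hu0).mp hs1
      nlinarith
    calc (1:ℝ) = Real.sqrt 1 := Real.sqrt_one.symm
    _ ≤ v := Real.sqrt_le_sqrt h1
  have hvu : v ^ 2 ≤ u := by
    rw [hv2, div_le_iff₀ (by positivity)]; nlinarith
  have hqv : q = T * P1 / v := by
    have h1 : q ^ 2 = (T * P1 / v) ^ 2 := by
      have hk' : k = T ^ 3 * (P0 * P1 ^ 2) / u := by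
        rw [hT3]; field_simp
      have hq2 : q ^ 2 = k / s := by field_simp [← hqs]; exact hqs
      rw [hq2, hk']
      rw [eq_div_iff (by positivity)] at hv2
      field_simp
      nlinarith [hv2]
    have h2 : q = Real.sqrt (q ^ 2) := (Real.sqrt_sq hq).symm
    rw [h2, h1, Real.sqrt_sq (by positivity)]
  have hsv : s = v ^ 2 * (P0 * T) / u := by
    rw [eq_div_iff (by positivity)] at hv2
    field_simp
    linarith [hv2]
  rw [hqv, hsv]
  rw [div_le_iff₀ hu0] at hs1
  have hvu' : v ≤ u := le_trans (by nlinarith) hvu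
  have hkey : v^3 + 2*u ≤ 2*u*v + v := by
    nlinarith [mul_nonneg (sub_nonneg.2 hv1) (by nlinarith : (0:ℝ) ≤ 2*u - v^2 - v)]
  rw [div_add_div _ _ (by positivity) (ne_of_gt hP1), div_le_iff₀ (by positivity)]
  have e1 : v ^ 2 * (P0 * T) / u * P1 = P0 * P1 * (T * v^2/u) := by field_simp
  have e2 : P0 * (2 * (T * P1 / v)) = P0 * P1 * (2*T/v) := by field_simp
  rw [e1, e2, ← mul_add]
  have h3 : T * v^2/u + 2*T/v ≤ T * (2 + 1/u) := by
    rw [div_add_div _ _ (ne_of_gt hu0) (ne_of_gt hv0), div_le_iff₀ (by positivity)]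
    have hr : T * (2 + 1/u) * (u * v) = T * (2*u*v + v) := by field_simp
    rw [hr]
    nlinarith [mul_le_mul_of_nonneg_left hkey (le_of_lt hT)]
  calc P0 * P1 * (T * v ^ 2 / u + 2 * T / v) ≤ P0 * P1 * (T * (2 + 1/u)) :=
        mul_le_mul_of_nonneg_left h3 (by positivity)
    _ = T * (2 + 1 / u) * (P0 * P1) := by ring

set_option maxHeartbeats 2000000 in
/-- In a complex cubic field `K = ℚ(α)` with real embedding `φ` and fundamental
unit `η` with `|φ(η)| > 1`, every `ξ ∈ K` of norm `±k ≠ 0` can be multiplied by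
a unit `ε` so that, writing `ξ ε = a + b α + c α²`, one has
`|c| ≤ (k |φ(η)| / |Δ|)^{1/3} (2 + 1/|φ(η)|)` with `Δ = disc(1, α, α²)`. -/
theorem stmt_15 (K : Type*) [Field K] [NumberField K]
    (α : K) (hα : IsIntegral ℤ α) (hgen : Algebra.adjoin ℚ {α} = ⊤)
    (hdeg : Module.finrank ℚ K = 3)
    (hcomplex : NumberField.InfinitePlace.nrComplexPlaces K = 1)
    (φ : K →+* ℂ) (hφ : ∀ x, (φ x).im = 0)
    (hΔ : Algebra.discr ℚ ![1, α, α ^ 2] ≠ 0)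
    (η : (𝓞 K)ˣ)
    (hfund : ∀ u : (𝓞 K)ˣ, ∃ (ζ : (𝓞 K)ˣ) (m : ℤ), IsOfFinOrder ζ ∧ u = ζ * η ^ m)
    (hη : 1 < ‖φ ((η : 𝓞 K) : K)‖)
    (b : Module.Basis (Fin 3) ℚ K) (hb : ∀ i : Fin 3, b i = α ^ (i : ℕ))
    (ξ : K) (k : ℝ) (hk : 0 < k) (hkξ : k = |(Algebra.norm ℚ ξ : ℝ)|) :
    ∃ ε : (𝓞 K)ˣ,
      |(b.repr (ξ * ((ε : 𝓞 K) : K)) 2 : ℝ)| ≤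
        (k * ‖φ ((η : 𝓞 K) : K)‖ / |((Algebra.discr ℚ ![1, α, α ^ 2] : ℚ) : ℝ)|)
            ^ ((1 : ℝ) / 3) *
          (2 + 1 / ‖φ ((η : 𝓞 K) : K)‖) := by
  classical
  set u : ℝ := ‖φ ((η : 𝓞 K) : K)‖ with hu_def
  have hu0 : (0:ℝ) < u := lt_trans one_pos hη
  have hξ0 : ξ ≠ 0 := by
    intro h
    rw [h, Algebra.norm_zero] at hkξ
    simp at hkξ
    exact absurd hkξ (ne_of_gt hk)
  -- the three embeddings
  have hcard3 : Fintype.card (K →+* ℂ) = 3 := by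
    rw [NumberField.Embeddings.card K ℂ, hdeg]
  have hφreal : ComplexEmbedding.IsReal φ := by
    rw [NumberField.ComplexEmbedding.isReal_iff]
    ext x
    exact Complex.conj_eq_iff_im.2 (hφ x)
  have hreal1 : Fintype.card {ψ : K →+* ℂ // NumberField.ComplexEmbedding.IsReal ψ} = 1 := by
    rw [NumberField.InfinitePlace.card_real_embeddings]
    have h := NumberField.InfinitePlace.card_add_two_mul_card_eq_rank K
    rw [hcomplex, hdeg] at h
    omega
  obtain ⟨σ, hσφ⟩ : ∃ σ : K →+* ℂ, σ ≠ φ := by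
    obtain ⟨σ, hσ⟩ := Fintype.exists_ne_of_one_lt_card (by rw [hcard3]; norm_num) φ
    exact ⟨σ, hσ⟩
  have hσnr : ¬ NumberField.ComplexEmbedding.IsReal σ := by
    intro h
    have h2 : (⟨σ, h⟩ : {ψ : K →+* ℂ // NumberField.ComplexEmbedding.IsReal ψ}) =
        ⟨φ, hφreal⟩ := by
      have : Subsingleton {ψ : K →+* ℂ // NumberField.ComplexEmbedding.IsReal ψ} :=
        Fintype.card_le_one_iff_subsingleton.mp (le_of_eq hreal1)
      exact Subsingleton.elim _ _
    exact hσφ (congrArg Subtype.val h2)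
  set τ : K →+* ℂ := NumberField.ComplexEmbedding.conjugate σ with hτ_def
  have hτσ : τ ≠ σ := by
    intro h
    exact hσnr (NumberField.ComplexEmbedding.isReal_iff.mpr h)
  have hτφ : τ ≠ φ := by
    intro h
    apply hσφ
    have : σ = NumberField.ComplexEmbedding.conjugate τ := by
      rw [hτ_def]
      exact (star_star σ).symm
    rw [this, h]
    exact NumberField.ComplexEmbedding.isReal_iff.mp hφreal
  have hτapp : ∀ x, τ x = (starRingEnd ℂ) (σ x) := fun x => rfl
  -- ring homs agreeing at α are equal
  have ext_at : ∀ ψ₁ ψ₂ : K →+* ℂ, ψ₁ α = ψ₂ α → ψ₁ = ψ₂ := by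
    intro ψ₁ ψ₂ h
    have h2 : ψ₁.toRatAlgHom = ψ₂.toRatAlgHom := by
      apply AlgHom.ext_of_adjoin_eq_top hgen
      intro x hx
      rw [Set.mem_singleton_iff] at hx
      subst hx
      exact h
    exact RingHom.ext fun y => AlgHom.congr_fun h2 y
  set t : Fin 3 → ℂ := ![φ α, σ α, τ α] with ht_def
  have ht01 : t 0 ≠ t 1 := fun h => hσφ (ext_at σ φ (by simpa [ht_def] using h.symm))
  have ht02 : t 0 ≠ t 2 := fun h => hτφ (ext_at τ φ (by simpa [ht_def] using h.symm))
  have ht12 : t 1 ≠ t 2 := fun h => hτσ (ext_at τ σ (by simpa [ht_def] using h.symm))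
  have htinj : Function.Injective t := by
    intro i j h
    fin_cases i <;> fin_cases j <;>
      first
        | rfl
        | exact absurd h (by assumption)
        | exact absurd h.symm (by assumption)
  -- equiv with AlgHoms
  set F : Fin 3 → (K →ₐ[ℚ] ℂ) := ![φ.toRatAlgHom, σ.toRatAlgHom, τ.toRatAlgHom] with hF_def
  have hFt : ∀ i, F i α = t i := by
    intro i; fin_cases i <;> rfl
  have hFinj : Function.Injective F := by
    intro i j h
    exact htinj (by rw [← hFt, ← hFt, h])
  have hcardA : Fintype.card (K →ₐ[ℚ] ℂ) = 3 := by
    rw [AlgHom.card, hdeg]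
  have hFbij : Function.Bijective F :=
    (Fintype.bijective_iff_injective_and_card F).2 ⟨hFinj, by rw [Fintype.card_fin, hcardA]⟩
  set e : Fin 3 ≃ (K →ₐ[ℚ] ℂ) := Equiv.ofBijective F hFbij with he_def
  have heF : ∀ i, e i = F i := fun i => rfl
  -- norms of elements via embeddings
  have hnorm : ∀ x : K, |(Algebra.norm ℚ x : ℝ)| = ‖φ x‖ * (‖σ x‖ * ‖σ x‖) := by
    intro x
    have h1 := Algebra.norm_eq_prod_embeddings ℚ ℂ (L := K) x
    rw [← Equiv.prod_comp e (fun ψ : K →ₐ[ℚ] ℂ => ψ x)] at h1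
    have h2 : ∏ i : Fin 3, (e i) x = φ x * (σ x * τ x) := by
      rw [Fin.prod_univ_three]
      simp only [heF, hF_def]
      simp [RingHom.toRatAlgHom]
      ring
    rw [h2] at h1
    have h3 := congrArg (fun z : ℂ => ‖z‖) h1
    simp only [eq_ratCast, norm_mul] at h3
    rw [hτapp, RCLike.norm_conj] at h3
    rw [← h3]
    rw [show ((Algebra.norm ℚ x : ℚ) : ℂ) = (((Algebra.norm ℚ x : ℚ) : ℝ) : ℂ) by push_cast; rfl]
    rw [Complex.norm_real, Real.norm_eq_abs]
  -- discriminant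
  have hdisc := Algebra.discr_eq_det_embeddingsMatrixReindex_pow_two ℚ ℂ (![1, α, α ^ 2]) e
  have hM : Algebra.embeddingsMatrixReindex ℚ ℂ (![1, α, α ^ 2]) e
      = (Matrix.vandermonde t).transpose := by
    ext i j
    have hentry : Algebra.embeddingsMatrixReindex ℚ ℂ (![1, α, α ^ 2]) e i j
        = (e j) (![1, α, α ^ 2] i) := rfl
    rw [hentry, Matrix.transpose_apply, Matrix.vandermonde]
    fin_cases i
    · simpa using map_one (e j)
    · simpa [heF] using hFt j
    · simpa [map_pow, heF] using congrArg (fun z : ℂ => z ^ 2) (hFt j)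
  set D : ℂ := (t 1 - t 0) * ((t 2 - t 0) * (t 2 - t 1)) with hD_def
  have hdetD : (Algebra.embeddingsMatrixReindex ℚ ℂ (![1, α, α ^ 2]) e).det = D := by
    rw [hM, Matrix.det_transpose, Matrix.det_vandermonde]
    rw [Fin.prod_univ_three]
    rw [show Finset.Ioi (0 : Fin 3) = {1, 2} from by decide,
        show Finset.Ioi (1 : Fin 3) = {2} from by decide,
        show Finset.Ioi (2 : Fin 3) = ∅ from by decide]
    rw [Finset.prod_insert (by decide), Finset.prod_singleton, Finset.prod_singleton,
        Finset.prod_empty]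
    ring
  have hΔD : |((Algebra.discr ℚ ![1, α, α ^ 2] : ℚ) : ℝ)| = ‖D‖ ^ 2 := by
    have h1 := congrArg (fun z : ℂ => ‖z‖) hdisc
    simp only [hdetD, eq_ratCast, norm_pow] at h1
    rw [show ((Algebra.discr ℚ ![1, α, α ^ 2] : ℚ) : ℂ)
        = (((Algebra.discr ℚ ![1, α, α ^ 2] : ℚ) : ℝ) : ℂ) by push_cast; rfl,
      Complex.norm_real, Real.norm_eq_abs] at h1
    exact h1
  -- conjugation relations
  have ht0real : (starRingEnd ℂ) (t 0) = t 0 := by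
    simp [ht_def, Complex.conj_eq_iff_im, hφ α]
  have ht2conj : t 2 = (starRingEnd ℂ) (t 1) := by
    simp [ht_def, hτapp]
  set a : ℝ := ‖t 1 - t 0‖ with ha_def
  set c : ℝ := ‖t 2 - t 1‖ with hc_def
  have ha0 : 0 < a := by
    rw [ha_def, norm_pos_iff]
    exact sub_ne_zero.2 (Ne.symm ht01)
  have hc0 : 0 < c := by
    rw [hc_def, norm_pos_iff]
    exact sub_ne_zero.2 (Ne.symm ht12)
  have ht20a : ‖t 2 - t 0‖ = a := by
    rw [ha_def, show t 2 - t 0 = (starRingEnd ℂ) (t 1 - t 0) by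
      rw [map_sub, ht0real, ← ht2conj], RCLike.norm_conj]
  have hnormD : ‖D‖ = a * (a * c) := by
    rw [hD_def, norm_mul, norm_mul, ht20a]
  -- coordinates via embeddings
  have hψx : ∀ (ψ : K →+* ℂ) (x : K), ψ x =
      ((b.repr x 0 : ℚ) : ℂ) + ((b.repr x 1 : ℚ) : ℂ) * ψ α
        + ((b.repr x 2 : ℚ) : ℂ) * (ψ α) ^ 2 := by
    intro ψ x
    conv_lhs => rw [← b.sum_repr x]
    rw [Fin.sum_univ_three]
    simp only [hb]
    simp [Algebra.smul_def, map_mul, map_pow, map_ratCast]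
    try push_cast
    try ring
  -- Lagrange bound for the top coefficient
  have hLagrange : ∀ x : K, |((b.repr x 2 : ℚ) : ℝ)| * (a ^ 2 * c)
      ≤ c * ‖φ x‖ + 2 * a * ‖σ x‖ := by
    intro x
    have e0 := hψx φ x
    have e1 := hψx σ x
    have e2 := hψx τ x
    have hc2 : ((b.repr x 2 : ℚ) : ℂ) * D =
        (t 2 - t 1) * φ x - (t 2 - t 0) * σ x + (t 1 - t 0) * τ x := by
      rw [hD_def]
      have ht0 : t 0 = φ α := rfl
      have ht1 : t 1 = σ α := rfl
      have ht2 : t 2 = τ α := rfl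
      rw [ht0, ht1, ht2]
      linear_combination (σ α - τ α) * e0 + (τ α - φ α) * e1 + (φ α - σ α) * e2
    have h1 := congrArg (fun z : ℂ => ‖z‖) hc2
    simp only [norm_mul] at h1
    have h2 : ‖((b.repr x 2 : ℚ) : ℂ)‖ = |((b.repr x 2 : ℚ) : ℝ)| := by
      rw [show ((b.repr x 2 : ℚ) : ℂ) = (((b.repr x 2 : ℚ) : ℝ) : ℂ) by push_cast; rfl,
        Complex.norm_real, Real.norm_eq_abs]
    rw [h2, hnormD] at h1
    have h3 : ‖(t 2 - t 1) * φ x - (t 2 - t 0) * σ x + (t 1 - t 0) * τ x‖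
        ≤ c * ‖φ x‖ + 2 * a * ‖σ x‖ := by
      calc ‖(t 2 - t 1) * φ x - (t 2 - t 0) * σ x + (t 1 - t 0) * τ x‖
          ≤ ‖(t 2 - t 1) * φ x - (t 2 - t 0) * σ x‖ + ‖(t 1 - t 0) * τ x‖ := norm_add_le _ _
        _ ≤ ‖(t 2 - t 1) * φ x‖ + ‖(t 2 - t 0) * σ x‖ + ‖(t 1 - t 0) * τ x‖ := by
              have := norm_sub_le ((t 2 - t 1) * φ x) ((t 2 - t 0) * σ x)
              linarith
        _ = c * ‖φ x‖ + 2 * a * ‖σ x‖ := by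
              rw [norm_mul, norm_mul, norm_mul, ht20a, hτapp, RCLike.norm_conj]
              rw [← ha_def, ← hc_def]
              ring
    calc |((b.repr x 2 : ℚ) : ℝ)| * (a ^ 2 * c)
        = |((b.repr x 2 : ℚ) : ℝ)| * (a * (a * c)) := by ring
      _ = ‖(t 2 - t 1) * φ x - (t 2 - t 0) * σ x + (t 1 - t 0) * τ x‖ := h1
      _ ≤ c * ‖φ x‖ + 2 * a * ‖σ x‖ := h3
  -- setup constants
  set Δr : ℝ := |((Algebra.discr ℚ ![1, α, α ^ 2] : ℚ) : ℝ)| with hΔr_def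
  have hΔr0 : 0 < Δr := by
    rw [hΔr_def]
    apply abs_pos.2
    exact_mod_cast hΔ
  set P0 : ℝ := a ^ 2 with hP0_def
  set P1 : ℝ := a * c with hP1_def
  have hP0 : 0 < P0 := by positivity
  have hP1 : 0 < P1 := by positivity
  have hΔP : Δr = P0 * P1 ^ 2 := by
    rw [hΔD, hnormD, hP0_def, hP1_def]; ring
  set T : ℝ := (k * u / Δr) ^ ((1:ℝ)/3) with hT_def
  have hT0 : 0 < T := by
    rw [hT_def]
    apply Real.rpow_pos_of_pos
    positivity
  have hT3 : T ^ 3 = k * u / (P0 * P1 ^ 2) := by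
    rw [← hΔP, hT_def, ← Real.rpow_natCast _ 3, ← Real.rpow_mul (by positivity)]
    norm_num
  -- powers of the unit
  set J : (𝓞 K)ˣ →* Kˣ := Units.map (algebraMap (𝓞 K) K : 𝓞 K →+* K).toMonoidHom with hJ_def
  have hJval : ∀ w : (𝓞 K)ˣ, ((J w : Kˣ) : K) = ((w : 𝓞 K) : K) := fun w => rfl
  have hzpow : ∀ m : ℤ, ‖φ (((η ^ m : (𝓞 K)ˣ) : 𝓞 K) : K)‖ = u ^ m := by
    intro m
    have h1 : (((η ^ m : (𝓞 K)ˣ) : 𝓞 K) : K) = (((J η : Kˣ) : K)) ^ m := by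
      rw [← hJval, map_zpow, Units.val_zpow_eq_zpow_val]
    rw [h1, map_zpow₀, norm_zpow, hJval]
  -- choose the unit
  have hφξ0 : φ ξ ≠ 0 := fun h => hξ0 ((map_eq_zero φ).mp h)
  have hφξpos : 0 < ‖φ ξ‖ := norm_pos_iff.2 hφξ0
  set L : ℝ := P0 * T / u with hL_def
  have hL0 : 0 < L := by positivity
  obtain ⟨n, hn1⟩ := exists_mem_Ico_zpow (x := ‖φ ξ‖ / L) (y := u) (by positivity) hη
  rw [Set.mem_Ico] at hn1
  obtain ⟨hn1, hn2⟩ := hn1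
  refine ⟨η ^ (-n), ?_⟩
  set x : K := ξ * (((η ^ (-n) : (𝓞 K)ˣ) : 𝓞 K) : K) with hx_def
  set s : ℝ := ‖φ x‖ with hs_def
  have hs_eq : s = ‖φ ξ‖ * (u ^ n)⁻¹ := by
    rw [hs_def, hx_def, map_mul, norm_mul, hzpow, zpow_neg]
  have hupow : (0:ℝ) < u ^ n := zpow_pos hu0 n
  have hs1 : L ≤ s := by
    have h1 : u ^ n * L ≤ ‖φ ξ‖ := (le_div_iff₀ hL0).mp hn1
    have h2 : L ≤ ‖φ ξ‖ / u ^ n := (le_div_iff₀ hupow).mpr (by linarith)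
    rw [hs_eq, ← div_eq_mul_inv]
    exact h2
  have hs2 : s < P0 * T := by
    have h2 : ‖φ ξ‖ < u ^ (n + 1) * L := (div_lt_iff₀ hL0).mp hn2
    rw [zpow_add₀ (ne_of_gt hu0), zpow_one] at h2
    have h3 : ‖φ ξ‖ / u ^ n < L * u := by
      rw [div_lt_iff₀ hupow]
      nlinarith
    have h4 : L * u = P0 * T := by
      rw [hL_def]
      field_simp
    rw [hs_eq, ← div_eq_mul_inv, ← h4]
    exact h3
  -- norm of x equals k
  have hunit : |(Algebra.norm ℚ (((η ^ (-n) : (𝓞 K)ˣ) : 𝓞 K) : K) : ℝ)| = 1 := by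
    have h := NumberField.isUnit_iff_norm.mp (η ^ (-n)).isUnit
    rw [RingOfIntegers.coe_norm] at h
    have := congrArg (fun r : ℚ => (r : ℝ)) h
    push_cast at this
    exact this
  have hnormx : |(Algebra.norm ℚ x : ℝ)| = k := by
    rw [hx_def, map_mul]
    push_cast
    rw [abs_mul, hunit, mul_one, ← hkξ]
  -- assemble
  set q : ℝ := ‖σ x‖ with hq_def
  have hq0 : (0:ℝ) ≤ q := norm_nonneg _
  have hqs : q ^ 2 * s = k := by
    have h5 : |(Algebra.norm ℚ x : ℝ)| = s * (q * q) := hnorm x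
    rw [hnormx] at h5
    rw [h5]; ring
  have hmain := key_ineq_stmt15 u k P0 P1 s q T hη hP0 hP1 hT0 hT3
    (by rw [← hL_def]; exact hs1) hs2 hq0 hqs
  have hlag := hLagrange x
  have h4 : |((b.repr x 2 : ℚ) : ℝ)| ≤ s / P0 + 2 * q / P1 := by
    have h6 : s / P0 + 2 * q / P1 = (c * s + 2 * a * q) / (a ^ 2 * c) := by
      rw [hP0_def, hP1_def]
      field_simp
    rw [h6, le_div_iff₀ (by positivity)]
    exact hlag
  exact le_trans h4 hmain
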